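/- Let θ ∈ (0, π/2) satisfy inequality (3) for some n, and let f: {0,1}^n → {0,1}^n be a bijection. For each input b, the composite operation — applying the bias gates then swapping amplitudes of |0⟩ and |f(b)⟩ — produces a state whose |f(b)⟩-amplitude is (1/√2)^n(cos^(2^n−1)(θ) + Σ_{i=0}^{2^n−2} cos^i(θ) sin(θ)) > 1/√2, so the measured output equals f(b) with probability > 1/2. -/

import Mathlib

open Real Finset

/-- The two-level transformation on `ℝ^(2^n)` acting on coordinates `(0, i)` by the
matrix `[[cos θ, sin θ], [sin θ, -cos θ]]`, leaving all other coordinates fixed. -/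
noncomputable def twoLevelBias (θ : ℝ) (n : ℕ) (i : ℕ) (v : Fin (2 ^ n) → ℝ) :
    Fin (2 ^ n) → ℝ :=
  haveI : NeZero (2 ^ n) := ⟨pow_ne_zero n two_ne_zero⟩
  fun j =>
    if j = (0 : Fin (2 ^ n)) then
      Real.cos θ * v 0 + Real.sin θ * v (Fin.ofNat (2 ^ n) i)
    else if j = (Fin.ofNat (2 ^ n) i) then
      Real.sin θ * v 0 - Real.cos θ * v (Fin.ofNat (2 ^ n) i)
    else v j

/-- Apply successively the two-level bias transformations on coordinates `(0, i)` for
`i = k, k-1, …, 1`. -/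
noncomputable def applyBiasGates (θ : ℝ) (n : ℕ) : ℕ → (Fin (2 ^ n) → ℝ) → (Fin (2 ^ n) → ℝ)
  | 0, v => v
  | k + 1, v => applyBiasGates θ n k (twoLevelBias θ n (k + 1) v)

open Fin.NatCast in
lemma bias_zero (θ : ℝ) (n : ℕ) (c : ℝ) :
    ∀ k, k < 2 ^ n → ∀ v : Fin (2 ^ n) → ℝ,
      (∀ j : Fin (2 ^ n), 1 ≤ (j : ℕ) → (j : ℕ) ≤ k → v j = c) →
      haveI : NeZero (2 ^ n) := ⟨pow_ne_zero n two_ne_zero⟩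
      applyBiasGates θ n k v (0 : Fin (2 ^ n)) =
        Real.cos θ ^ k * v 0 + (∑ i ∈ Finset.range k, Real.cos θ ^ i * Real.sin θ) * c := by
  haveI : NeZero (2 ^ n) := ⟨pow_ne_zero n two_ne_zero⟩
  intro k
  induction k with
  | zero => intro _ v _; simp [applyBiasGates]
  | succ k ih =>
    intro hk v hv
    have hk1 : k + 1 < 2 ^ n := hk
    have hcast : (((k+1 : ℕ)) : Fin (2 ^ n)) = (k : Fin (2 ^ n)) + 1 := by push_cast; ring
    have hval : (((k : Fin (2 ^ n)) + 1) : Fin (2 ^ n)).val = k + 1 := by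
      rw [← hcast]; exact Fin.val_cast_of_lt hk
    have hne : ((k : Fin (2 ^ n)) + 1) ≠ 0 := by
      intro h
      have := congrArg Fin.val h
      rw [hval] at this
      simp at this
    have hvk : v ((k : Fin (2 ^ n)) + 1) = c := by
      apply hv <;> rw [hval] <;> omega
    show applyBiasGates θ n k (twoLevelBias θ n (k+1) v) 0 = _
    rw [ih (Nat.lt_of_succ_lt hk) _ ?_]
    · have h0 : twoLevelBias θ n (k+1) v 0 =
          Real.cos θ * v 0 + Real.sin θ * c := by
        simp [twoLevelBias, hvk]
      rw [h0, Finset.sum_range_succ]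
      ring
    · intro j hj1 hjk
      have hj0 : j ≠ 0 := by
        intro h; rw [h] at hj1; simp at hj1
      have hjk1 : j ≠ (k : Fin (2 ^ n)) + 1 := by
        intro h
        have := congrArg Fin.val h
        rw [hval] at this; omega
      simp [twoLevelBias, hj0, hjk1]
      exact hv j hj1 (Nat.le_succ_of_le hjk)

theorem stmt_18 (n : ℕ) (hn : 1 ≤ n) (θ : ℝ) (hθ : θ ∈ Set.Ioo 0 (Real.pi / 2))
    (hineq : (1 / Real.sqrt 2) ^ n *
        (Real.cos θ ^ (2 ^ n - 1) +
          ∑ i ∈ Finset.range (2 ^ n - 1), Real.cos θ ^ i * Real.sin θ)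
      > 1 / Real.sqrt 2)
    (f : Fin (2 ^ n) ≃ Fin (2 ^ n)) (b : Fin (2 ^ n)) :
    haveI : NeZero (2 ^ n) := ⟨pow_ne_zero n two_ne_zero⟩
    -- `w` is the state after the Hadamard (uniform amplitudes) and the bias gates;
    -- `s` is the result of swapping the amplitudes of `|0⟩` and `|f b⟩`.
    let w : Fin (2 ^ n) → ℝ := applyBiasGates θ n (2 ^ n - 1) (fun _ => (1 / Real.sqrt 2) ^ n)
    let s : Fin (2 ^ n) → ℝ := Function.update (Function.update w 0 (w (f b))) (f b) (w 0)
    s (f b) = (1 / Real.sqrt 2) ^ n *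
        (Real.cos θ ^ (2 ^ n - 1) +
          ∑ i ∈ Finset.range (2 ^ n - 1), Real.cos θ ^ i * Real.sin θ) ∧
    s (f b) > 1 / Real.sqrt 2 ∧
    s (f b) ^ 2 > 1 / 2 := by
  haveI : NeZero (2 ^ n) := ⟨pow_ne_zero n two_ne_zero⟩
  intro w s
  have hs : s (f b) = w 0 := by simp [s, Function.update]
  have hw : w 0 = (1 / Real.sqrt 2) ^ n *
      (Real.cos θ ^ (2 ^ n - 1) +
        ∑ i ∈ Finset.range (2 ^ n - 1), Real.cos θ ^ i * Real.sin θ) := by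
    have := bias_zero θ n ((1 / Real.sqrt 2) ^ n) (2 ^ n - 1)
      (by have := Nat.one_le_two_pow (n := n); omega)
      (fun _ => (1 / Real.sqrt 2) ^ n) (fun _ _ _ => rfl)
    rw [show w 0 = _ from this]
    ring
  have h1 : s (f b) = _ := hs.trans hw
  refine ⟨h1, by rw [h1]; exact hineq, ?_⟩
  have hpos : (0:ℝ) < 1 / Real.sqrt 2 := by positivity
  have hgt : s (f b) > 1 / Real.sqrt 2 := by rw [h1]; exact hineq
  have : (1 / Real.sqrt 2) ^ 2 < s (f b) ^ 2 := by
    apply pow_lt_pow_left₀ hgt hpos.le (by norm_num)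
  calc (1:ℝ)/2 = (1 / Real.sqrt 2) ^ 2 := by
        rw [div_pow, one_pow, Real.sq_sqrt (by norm_num)]
    _ < _ := this
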